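/- arXiv:2104.07947 — 2 statements merged into one kernel-verified Lean document; each statement's English description precedes it below -/
import Mathlib

section
/- Let α ∈ (1,2) and let σ : ℝ → (0,∞) be continuous. If δ := sup_{x>0} x^{α-1} ∫_{ℝ∖(-x,x)} σ(y)^{-α} dy < ∞, then for every y > 0, ∫_{ℝ∖(-y,y)} |z|^{(α-1)/2} σ(z)^{-α} dz ≤ 2δ y^{-(α-1)/2}. -/
open MeasureTheory Set

theorem stmt2 (α δ : ℝ) (hα1 : 1 < α) (hα2 : α < 2)
    (σ : ℝ → ℝ) (hσc : Continuous σ) (hσ : ∀ x, 0 < σ x)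
    (hδ : ∀ x : ℝ, 0 < x →
      ENNReal.ofReal (x ^ (α - 1)) *
        ∫⁻ z in (Set.Ioo (-x) x)ᶜ, ENNReal.ofReal ((σ z) ^ (-α)) ≤
          ENNReal.ofReal δ) :
    ∀ y : ℝ, 0 < y →
      ∫⁻ z in (Set.Ioo (-y) y)ᶜ,
          ENNReal.ofReal (|z| ^ ((α - 1) / 2) * (σ z) ^ (-α)) ≤
        ENNReal.ofReal (2 * δ * y ^ (-((α - 1) / 2))) := by
  intro y hy
  set β : ℝ := (α - 1) / 2 with hβdef
  have hβ : 0 < β := by rw [hβdef]; linarith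
  have hβ2 : α - 1 = 2 * β := by rw [hβdef]; ring
  set f : ℝ → ENNReal := fun z => ENNReal.ofReal (σ z ^ (-α)) with hfdef
  have hfm : Measurable f := by
    apply ENNReal.measurable_ofReal.comp
    exact (hσc.rpow_const (fun z => Or.inl (hσ z).ne')).measurable
  -- tail bound
  have hT : ∀ x : ℝ, 0 < x →
      ∫⁻ z in (Set.Ioo (-x) x)ᶜ, f z ≤ ENNReal.ofReal (δ * x ^ (1 - α)) := by
    intro x hx
    have hxp : (0:ℝ) < x ^ (α - 1) := Real.rpow_pos_of_pos hx _
    have h1 := hδ x hx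
    rw [mul_comm] at h1
    have h2 : (∫⁻ z in (Set.Ioo (-x) x)ᶜ, f z) ≤
        ENNReal.ofReal δ / ENNReal.ofReal (x ^ (α - 1)) := by
      rw [ENNReal.le_div_iff_mul_le (Or.inl (by simp [ENNReal.ofReal_eq_zero, not_le, hxp]))
        (Or.inl ENNReal.ofReal_ne_top)]
      exact h1
    refine h2.trans_eq ?_
    rw [← ENNReal.ofReal_div_of_pos hxp]
    congr 1
    rw [div_eq_mul_inv, ← Real.rpow_neg hx.le]
    ring_nf
  -- δ nonneg
  have hδ0 : 0 ≤ δ := by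
    by_contra h
    push_neg at h
    have h1 := hδ 1 one_pos
    rw [Real.one_rpow, ENNReal.ofReal_one, one_mul,
      ENNReal.ofReal_eq_zero.mpr h.le] at h1
    have h2 : (∫⁻ z in (Set.Ioo (-(1:ℝ)) 1)ᶜ, f z) = 0 := le_antisymm h1 zero_le
    rw [lintegral_eq_zero_iff hfm] at h2
    have h3 : ∀ z : ℝ, f z ≠ 0 := by
      intro z
      simp only [hfdef, ne_eq, ENNReal.ofReal_eq_zero, not_le]
      exact Real.rpow_pos_of_pos (hσ z) _
    rw [Filter.EventuallyEq, ae_iff] at h2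
    simp only [h3, Pi.zero_apply, not_false_iff, Set.setOf_true,
      Measure.restrict_apply_univ] at h2
    have h5 : volume (Set.Ici (1:ℝ)) ≤ volume (Set.Ioo (-(1:ℝ)) 1)ᶜ := by
      apply measure_mono
      intro z hz
      simp only [Set.mem_compl_iff, Set.mem_Ioo, not_and, not_lt]
      intro _
      exact hz
    rw [h2, Real.volume_Ici] at h5
    simp at h5
  -- the layer-cake kernel
  set g : ℝ → ENNReal := fun x => ENNReal.ofReal (β * x ^ (β - 1)) with hgdef
  have hgm : Measurable g := by
    apply ENNReal.measurable_ofReal.comp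
    fun_prop
  set Sy : Set ℝ := (Set.Ioo (-y) y)ᶜ with hSydef
  have hSym : MeasurableSet Sy := isOpen_Ioo.measurableSet.compl
  -- membership criterion for the tail sets
  have hcrit : ∀ x : ℝ, ∀ z : ℝ, z ∈ (Set.Ioo (-x) x)ᶜ ↔ x ≤ |z| := by
    intro x z
    simp only [Set.mem_compl_iff, Set.mem_Ioo, not_and_or, not_lt, le_abs]
    constructor
    · rintro (h | h)
      · right; linarith
      · left; exact h
    · rintro (h | h)
      · right; exact h
      · left; linarith
  have hmem : ∀ z ∈ Sy, y ≤ |z| := fun z hz => (hcrit y z).mp hz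
  -- decomposition of |z|^β
  have hdec : ∀ z : ℝ, y ≤ |z| →
      ENNReal.ofReal (|z| ^ β) =
        ENNReal.ofReal (y ^ β) + ∫⁻ x in Set.Ioc y |z|, g x := by
    intro z hz
    have hint : IntegrableOn (fun x => β * x ^ (β - 1)) (Set.Ioc y |z|) := by
      apply (ContinuousOn.integrableOn_Icc ?_).mono_set Set.Ioc_subset_Icc_self
      exact (continuousOn_id.rpow_const
        (fun x hx => Or.inl (ne_of_gt (lt_of_lt_of_le hy hx.1)))).const_smul β
    have h1 : (∫⁻ x in Set.Ioc y |z|, g x) =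
        ENNReal.ofReal (∫ x in Set.Ioc y |z|, β * x ^ (β - 1)) := by
      rw [← ofReal_integral_eq_lintegral_ofReal hint ?_]
      filter_upwards [ae_restrict_mem measurableSet_Ioc] with x hx
      have hx0 : 0 < x := hy.trans hx.1
      positivity
    have h2 : (∫ x in Set.Ioc y |z|, β * x ^ (β - 1)) = |z| ^ β - y ^ β := by
      rw [← intervalIntegral.integral_of_le hz, intervalIntegral.integral_const_mul,
        integral_rpow (Or.inl (by linarith))]
      rw [show β - 1 + 1 = β by ring]
      field_simp
    rw [h1, h2,
      ← ENNReal.ofReal_add (by positivity)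
        (sub_nonneg.mpr (Real.rpow_le_rpow hy.le hz hβ.le))]
    ring_nf
  -- pointwise identity on Sy
  have key : ∀ z ∈ Sy, ENNReal.ofReal (|z| ^ β * σ z ^ (-α)) =
      ENNReal.ofReal (y ^ β) * f z +
        ∫⁻ x in Set.Ioi y, (Set.Iic |z|).indicator g x * f z := by
    intro z hz
    rw [ENNReal.ofReal_mul (Real.rpow_nonneg (abs_nonneg z) _)]
    have hfz : ENNReal.ofReal (σ z ^ (-α)) = f z := rfl
    rw [hfz, hdec z (hmem z hz), add_mul]
    congr 1
    rw [lintegral_mul_const _ (hgm.indicator measurableSet_Iic)]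
    congr 1
    rw [lintegral_indicator measurableSet_Iic,
      Measure.restrict_restrict measurableSet_Iic, Set.Iic_inter_Ioi]
  -- swap of integrals
  have hswap : (∫⁻ z in Sy, ∫⁻ x in Set.Ioi y, (Set.Iic |z|).indicator g x * f z) =
      ∫⁻ x in Set.Ioi y, ∫⁻ z in Sy, (Set.Iic |z|).indicator g x * f z := by
    apply lintegral_lintegral_swap
    apply Measurable.aemeasurable
    have huncurry : (Function.uncurry fun z x => (Set.Iic |z|).indicator g x * f z) =
        fun p : ℝ × ℝ => (if p.2 ≤ |p.1| then g p.2 else 0) * f p.1 := by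
      ext p
      simp [Function.uncurry, Set.indicator_apply]
    rw [huncurry]
    exact (Measurable.ite (measurableSet_le measurable_snd measurable_fst.abs)
      (hgm.comp measurable_snd) measurable_const).mul (hfm.comp measurable_fst)
  have hβα : β - α < -1 := by rw [hβdef]; linarith
  -- bound for the inner integral after the swap
  have hinner : ∀ x ∈ Set.Ioi y, (∫⁻ z in Sy, (Set.Iic |z|).indicator g x * f z) ≤
      ENNReal.ofReal (δ * β * x ^ (β - α)) := by
    intro x hx
    have hxy : y < x := hx
    have hx0 : 0 < x := hy.trans hxy
    have heq : ∀ z : ℝ, (Set.Iic |z|).indicator g x * f z =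
        ((Set.Ioo (-x) x)ᶜ).indicator (fun z => g x * f z) z := by
      intro z
      by_cases h : x ≤ |z|
      · rw [Set.indicator_of_mem (Set.mem_Iic.mpr h), Set.indicator_of_mem ((hcrit x z).mpr h)]
      · rw [Set.indicator_of_notMem (by simpa using h),
          Set.indicator_of_notMem (fun hc => h ((hcrit x z).mp hc)), zero_mul]
    simp_rw [heq]
    rw [lintegral_indicator isOpen_Ioo.measurableSet.compl,
      Measure.restrict_restrict isOpen_Ioo.measurableSet.compl]
    have hsub : (Set.Ioo (-x) x)ᶜ ∩ Sy = (Set.Ioo (-x) x)ᶜ := by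
      apply Set.inter_eq_left.mpr
      rw [hSydef]
      exact Set.compl_subset_compl.mpr (Set.Ioo_subset_Ioo (by linarith) hxy.le)
    rw [hsub, lintegral_const_mul _ hfm]
    calc g x * ∫⁻ z in (Set.Ioo (-x) x)ᶜ, f z
        ≤ g x * ENNReal.ofReal (δ * x ^ (1 - α)) := mul_le_mul_right (hT x hx0) _
      _ = ENNReal.ofReal (δ * β * x ^ (β - α)) := by
          have hgx : g x = ENNReal.ofReal (β * x ^ (β - 1)) := rfl
          rw [hgx, ← ENNReal.ofReal_mul (by positivity)]
          congr 1
          rw [show β - α = (β - 1) + (1 - α) by ring, Real.rpow_add hx0]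
          ring
  -- value of the outer integral
  have houter : (∫⁻ x in Set.Ioi y, ENNReal.ofReal (δ * β * x ^ (β - α))) =
      ENNReal.ofReal (δ * y ^ (-β)) := by
    have hi : IntegrableOn (fun x => δ * β * x ^ (β - α)) (Set.Ioi y) :=
      (integrableOn_Ioi_rpow_of_lt hβα hy).const_mul (δ * β)
    rw [← ofReal_integral_eq_lintegral_ofReal hi ?_]
    · congr 1
      rw [integral_const_mul, integral_Ioi_rpow_of_lt hβα hy,
        show β - α + 1 = -β by rw [hβdef]; linarith]
      field_simp
    · filter_upwards [ae_restrict_mem measurableSet_Ioi] with x hx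
      have hx0 : 0 < x := hy.trans hx
      positivity
  calc ∫⁻ z in Sy, ENNReal.ofReal (|z| ^ β * σ z ^ (-α))
      = ∫⁻ z in Sy, (ENNReal.ofReal (y ^ β) * f z +
          ∫⁻ x in Set.Ioi y, (Set.Iic |z|).indicator g x * f z) := by
        refine setLIntegral_congr_fun hSym ?_
        exact key
    _ = (∫⁻ z in Sy, ENNReal.ofReal (y ^ β) * f z) +
          ∫⁻ z in Sy, ∫⁻ x in Set.Ioi y, (Set.Iic |z|).indicator g x * f z :=
        lintegral_add_left (measurable_const.mul hfm) _
    _ ≤ ENNReal.ofReal (δ * y ^ (-β)) + ENNReal.ofReal (δ * y ^ (-β)) := by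
        apply add_le_add
        · rw [lintegral_const_mul _ hfm]
          calc ENNReal.ofReal (y ^ β) * ∫⁻ z in Sy, f z
              ≤ ENNReal.ofReal (y ^ β) * ENNReal.ofReal (δ * y ^ (1 - α)) :=
                mul_le_mul_right (hT y hy) _
            _ = ENNReal.ofReal (δ * y ^ (-β)) := by
                rw [← ENNReal.ofReal_mul (Real.rpow_nonneg hy.le _)]
                congr 1
                rw [show -β = β + (1 - α) by rw [hβdef]; linarith, Real.rpow_add hy]
                ring
        · rw [hswap]
          calc (∫⁻ x in Set.Ioi y, ∫⁻ z in Sy, (Set.Iic |z|).indicator g x * f z)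
              ≤ ∫⁻ x in Set.Ioi y, ENNReal.ofReal (δ * β * x ^ (β - α)) :=
                setLIntegral_mono' measurableSet_Ioi hinner
            _ = ENNReal.ofReal (δ * y ^ (-β)) := houter
    _ = ENNReal.ofReal (2 * δ * y ^ (-β)) := by
        rw [← ENNReal.ofReal_add (mul_nonneg hδ0 (Real.rpow_nonneg hy.le _))
          (mul_nonneg hδ0 (Real.rpow_nonneg hy.le _))]
        congr 1
        ring
end

section
/- Let α ∈ (1,2) and let σ : (0,∞) → (0,∞) be measurable with δ₊ := sup_{x>0} x^{α-1} ∫_x^∞ σ(z)^{-α} dz < ∞. Then for φ(x) = x^{(α-1)/2} and every x > 0: (1/φ(x)) ∫_0^x z^{α-2} (∫_z^∞ φ(y) σ(y)^{-α} dy) dz ≤ 4δ₊/(α-1). -/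
open MeasureTheory Set

private lemma stmt19_inner (α δ : ℝ) (hα1 : 1 < α) (hα2 : α < 2)
    (σ : ℝ → ℝ) (hσm : Measurable σ) (hσ : ∀ x, 0 < x → 0 < σ x)
    (hfin : ∀ x : ℝ, 0 < x → IntegrableOn (fun z => (σ z) ^ (-α)) (Set.Ioi x))
    (hδ : ∀ x : ℝ, 0 < x →
      x ^ (α - 1) * (∫ z in Set.Ioi x, (σ z) ^ (-α)) ≤ δ)
    {z : ℝ} (hz : 0 < z) :
    ∫ y in Ioi z, y ^ ((α - 1) / 2) * (σ y) ^ (-α) ≤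
      2 * δ * z ^ (-((α - 1) / 2)) := by
  set β := (α - 1) / 2 with hβdef
  have hβ : 0 < β := by rw [hβdef]; linarith
  have hnnσ : ∀ t : ℝ, 0 < t → ∀ y ∈ Ioi t, 0 ≤ σ y ^ (-α) := fun t ht y hy =>
    (Real.rpow_pos_of_pos (hσ y (ht.trans hy)) _).le
  have hδ0 : 0 ≤ δ := by
    have h1 := hδ 1 one_pos
    have h2 : 0 ≤ ∫ y in Ioi (1 : ℝ), σ y ^ (-α) :=
      setIntegral_nonneg measurableSet_Ioi (hnnσ 1 one_pos)
    rw [Real.one_rpow, one_mul] at h1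
    linarith
  -- bound on tail integral of σ ^ (-α)
  have hT : ∀ t : ℝ, 0 < t → (∫ y in Ioi t, σ y ^ (-α)) ≤ δ * t ^ (1 - α) := by
    intro t ht
    have h1 := hδ t ht
    have h2 : (0 : ℝ) < t ^ (α - 1) := Real.rpow_pos_of_pos ht _
    have h3 : t ^ (1 - α) = (t ^ (α - 1))⁻¹ := by
      rw [← Real.rpow_neg ht.le]; ring_nf
    rw [h3, ← div_eq_mul_inv, le_div_iff₀ h2, mul_comm]
    exact h1
  have hTl : ∀ t : ℝ, 0 < t →
      (∫⁻ y in Ioi t, ENNReal.ofReal (σ y ^ (-α))) ≤ ENNReal.ofReal (δ * t ^ (1 - α)) := by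
    intro t ht
    rw [← ofReal_integral_eq_lintegral_ofReal (hfin t ht)
      ((ae_restrict_iff' measurableSet_Ioi).2 (ae_of_all _ (hnnσ t ht)))]
    exact ENNReal.ofReal_le_ofReal (hT t ht)
  -- the Fubini kernel
  set F : ℝ → ℝ → ENNReal := fun t y =>
    if z < t ∧ t < y then ENNReal.ofReal (β * t ^ (β - 1)) * ENNReal.ofReal (σ y ^ (-α))
    else 0 with hFdef
  have hFmeas : Measurable (Function.uncurry F) := by
    apply Measurable.ite
    · exact (measurableSet_lt measurable_const measurable_fst).inter
        (measurableSet_lt measurable_fst measurable_snd)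
    · have hm1 : Measurable fun p : ℝ × ℝ => ENNReal.ofReal (β * p.1 ^ (β - 1)) := by fun_prop
      have hm2 : Measurable fun p : ℝ × ℝ => ENNReal.ofReal (σ p.2 ^ (-α)) := by fun_prop
      exact hm1.mul hm2
    · exact measurable_const
  -- side computed in y
  have yside : (∫⁻ y, ∫⁻ t, F t y) =
      ∫⁻ y in Ioi z, ENNReal.ofReal (y ^ β - z ^ β) * ENNReal.ofReal (σ y ^ (-α)) := by
    rw [← lintegral_indicator measurableSet_Ioi]
    apply lintegral_congr
    intro y
    by_cases hy : z < y
    · have hF : ∀ t, F t y = (Ioo z y).indicator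
          (fun t => ENNReal.ofReal (β * t ^ (β - 1)) * ENNReal.ofReal (σ y ^ (-α))) t := by
        intro t
        by_cases h : z < t ∧ t < y
        · simp [hFdef, h, indicator_of_mem (mem_Ioo.2 h)]
        · simp [hFdef, h, indicator_of_notMem (fun hh => h (mem_Ioo.1 hh))]
      calc (∫⁻ t, F t y)
          = ∫⁻ t in Ioo z y, ENNReal.ofReal (β * t ^ (β - 1)) * ENNReal.ofReal (σ y ^ (-α)) := by
            rw [← lintegral_indicator measurableSet_Ioo]; exact lintegral_congr hF
        _ = (∫⁻ t in Ioo z y, ENNReal.ofReal (β * t ^ (β - 1))) * ENNReal.ofReal (σ y ^ (-α)) := by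
            apply lintegral_mul_const
            fun_prop
        _ = ENNReal.ofReal (y ^ β - z ^ β) * ENNReal.ofReal (σ y ^ (-α)) := by
            congr 1
            have hint : IntegrableOn (fun t : ℝ => β * t ^ (β - 1)) (Ioo z y) := by
              have h1 : IntervalIntegrable (fun t : ℝ => t ^ (β - 1)) volume z y :=
                intervalIntegral.intervalIntegrable_rpow' (by linarith)
              have h2 := (h1.const_mul β)
              rw [intervalIntegrable_iff_integrableOn_Ioo_of_le hy.le] at h2
              exact h2
            have hnn : 0 ≤ᵐ[volume.restrict (Ioo z y)] fun t : ℝ => β * t ^ (β - 1) := by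
              refine (ae_restrict_iff' measurableSet_Ioo).2 (ae_of_all _ fun t ht => ?_)
              exact mul_nonneg hβ.le (Real.rpow_pos_of_pos (hz.trans ht.1) _).le
            rw [← ofReal_integral_eq_lintegral_ofReal hint hnn]
            congr 1
            rw [← integral_Ioc_eq_integral_Ioo, ← intervalIntegral.integral_of_le hy.le,
              intervalIntegral.integral_const_mul, integral_rpow (Or.inl (by linarith))]
            have hb : β - 1 + 1 = β := by ring
            rw [hb]
            field_simp
        _ = (Ioi z).indicator
            (fun y => ENNReal.ofReal (y ^ β - z ^ β) * ENNReal.ofReal (σ y ^ (-α))) y := by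
            rw [indicator_of_mem (mem_Ioi.2 hy)]
    · have hF : ∀ t, F t y = 0 := by
        intro t
        have : ¬(z < t ∧ t < y) := fun h => hy (lt_trans h.1 h.2)
        simp [hFdef, this]
      simp [hF, indicator_of_notMem (fun hh => hy (mem_Ioi.1 hh))]
  -- side computed in t, with the bound
  have tside : (∫⁻ t, ∫⁻ y, F t y) ≤ ENNReal.ofReal (δ * z ^ (-β)) := by
    have step : ∀ t : ℝ, (∫⁻ y, F t y) ≤
        (Ioi z).indicator (fun t => ENNReal.ofReal (δ * β * t ^ (β - α))) t := by
      intro t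
      by_cases ht : z < t
      · have ht0 : 0 < t := hz.trans ht
        have hF : ∀ y, F t y = (Ioi t).indicator
            (fun y => ENNReal.ofReal (β * t ^ (β - 1)) * ENNReal.ofReal (σ y ^ (-α))) y := by
          intro y
          by_cases h : t < y
          · simp [hFdef, ht, h, indicator_of_mem (mem_Ioi.2 h)]
          · simp [hFdef, h, indicator_of_notMem (fun hh => h (mem_Ioi.1 hh))]
        calc (∫⁻ y, F t y)
            = ∫⁻ y in Ioi t, ENNReal.ofReal (β * t ^ (β - 1)) * ENNReal.ofReal (σ y ^ (-α)) := by
              rw [← lintegral_indicator measurableSet_Ioi]; exact lintegral_congr hF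
          _ = ENNReal.ofReal (β * t ^ (β - 1)) * ∫⁻ y in Ioi t, ENNReal.ofReal (σ y ^ (-α)) := by
              apply lintegral_const_mul
              fun_prop
          _ ≤ ENNReal.ofReal (β * t ^ (β - 1)) * ENNReal.ofReal (δ * t ^ (1 - α)) :=
              mul_le_mul_right (hTl t ht0) _
          _ = ENNReal.ofReal (δ * β * t ^ (β - α)) := by
              rw [← ENNReal.ofReal_mul (mul_nonneg hβ.le (Real.rpow_pos_of_pos ht0 _).le)]
              congr 1
              rw [show β * t ^ (β - 1) * (δ * t ^ (1 - α))
                  = δ * β * (t ^ (β - 1) * t ^ (1 - α)) from by ring,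
                ← Real.rpow_add ht0, show β - 1 + (1 - α) = β - α from by ring]
          _ = (Ioi z).indicator (fun t => ENNReal.ofReal (δ * β * t ^ (β - α))) t := by
              rw [indicator_of_mem (mem_Ioi.2 ht)]
      · have hF : ∀ y, F t y = 0 := by
          intro y
          have : ¬(z < t ∧ t < y) := fun h => ht h.1
          simp [hFdef, this]
        simp [hF, indicator_of_notMem (fun hh => ht (mem_Ioi.1 hh))]
    calc (∫⁻ t, ∫⁻ y, F t y)
        ≤ ∫⁻ t, (Ioi z).indicator (fun t => ENNReal.ofReal (δ * β * t ^ (β - α))) t :=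
          lintegral_mono step
      _ = ∫⁻ t in Ioi z, ENNReal.ofReal (δ * β * t ^ (β - α)) :=
          lintegral_indicator measurableSet_Ioi _
      _ = ENNReal.ofReal (∫ t in Ioi z, δ * β * t ^ (β - α)) := by
          have hβα : β - α < -1 := by rw [hβdef]; linarith
          have hint : IntegrableOn (fun t : ℝ => δ * β * t ^ (β - α)) (Ioi z) :=
            (integrableOn_Ioi_rpow_of_lt hβα hz).const_mul _
          have hnn : 0 ≤ᵐ[volume.restrict (Ioi z)] fun t : ℝ => δ * β * t ^ (β - α) := by
            refine (ae_restrict_iff' measurableSet_Ioi).2 (ae_of_all _ fun t ht => ?_)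
            exact mul_nonneg (mul_nonneg hδ0 hβ.le) (Real.rpow_pos_of_pos (hz.trans ht) _).le
          rw [← ofReal_integral_eq_lintegral_ofReal hint hnn]
      _ = ENNReal.ofReal (δ * z ^ (-β)) := by
          congr 1
          have hβα : β - α < -1 := by rw [hβdef]; linarith
          rw [MeasureTheory.integral_const_mul, integral_Ioi_rpow_of_lt hβα hz,
            show β - α + 1 = -β from by rw [hβdef]; ring]
          field_simp
    
  -- assemble
  have hswap := lintegral_lintegral_swap (μ := (volume : Measure ℝ)) (ν := (volume : Measure ℝ)) hFmeas.aemeasurable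
  have hnny : ∀ y ∈ Ioi z, (0:ℝ) ≤ y ^ β * σ y ^ (-α) := fun y hy =>
    mul_nonneg (Real.rpow_pos_of_pos (hz.trans hy) _).le (hnnσ z hz y hy)
  have hL : (∫⁻ y in Ioi z, ENNReal.ofReal (y ^ β * σ y ^ (-α)))
      ≤ ENNReal.ofReal (2 * δ * z ^ (-β)) := by
    have hsplit : (∫⁻ y in Ioi z, ENNReal.ofReal (y ^ β * σ y ^ (-α)))
        = ∫⁻ y in Ioi z, (ENNReal.ofReal (z ^ β) * ENNReal.ofReal (σ y ^ (-α))
            + ENNReal.ofReal (y ^ β - z ^ β) * ENNReal.ofReal (σ y ^ (-α))) := by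
      apply setLIntegral_congr_fun measurableSet_Ioi
      intro y hy; dsimp only
      have hy0 : 0 < y := hz.trans hy
      have h1 : z ^ β ≤ y ^ β := Real.rpow_le_rpow hz.le (le_of_lt hy) hβ.le
      rw [← add_mul, ← ENNReal.ofReal_add (Real.rpow_pos_of_pos hz _).le (by linarith),
        show z ^ β + (y ^ β - z ^ β) = y ^ β from by ring,
        ← ENNReal.ofReal_mul (Real.rpow_pos_of_pos hy0 _).le]
    rw [hsplit, lintegral_add_left (by fun_prop)]
    have hA : ENNReal.ofReal (z ^ β) * (∫⁻ y in Ioi z, ENNReal.ofReal (σ y ^ (-α)))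
        ≤ ENNReal.ofReal (δ * z ^ (-β)) := by
      calc ENNReal.ofReal (z ^ β) * (∫⁻ y in Ioi z, ENNReal.ofReal (σ y ^ (-α)))
          ≤ ENNReal.ofReal (z ^ β) * ENNReal.ofReal (δ * z ^ (1 - α)) :=
            mul_le_mul_right (hTl z hz) _
        _ = ENNReal.ofReal (δ * z ^ (-β)) := by
            rw [← ENNReal.ofReal_mul (Real.rpow_pos_of_pos hz _).le]
            congr 1
            rw [show z ^ β * (δ * z ^ (1 - α)) = δ * (z ^ β * z ^ (1 - α)) from by ring,
              ← Real.rpow_add hz, show β + (1 - α) = -β from by rw [hβdef]; ring]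
    have hB : (∫⁻ y in Ioi z, ENNReal.ofReal (y ^ β - z ^ β) * ENNReal.ofReal (σ y ^ (-α)))
        ≤ ENNReal.ofReal (δ * z ^ (-β)) := by
      rw [← yside, ← hswap]; exact tside
    calc _ ≤ ENNReal.ofReal (δ * z ^ (-β)) + ENNReal.ofReal (δ * z ^ (-β)) :=
          by
            have h1 : ENNReal.ofReal (z ^ β) * (∫⁻ y in Ioi z, ENNReal.ofReal (σ y ^ (-α)))
                = ∫⁻ y in Ioi z, ENNReal.ofReal (z ^ β) * ENNReal.ofReal (σ y ^ (-α)) :=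
              (lintegral_const_mul _ (by fun_prop)).symm
            rw [← h1]
            exact add_le_add hA hB
      _ = ENNReal.ofReal (2 * δ * z ^ (-β)) := by
          rw [← ENNReal.ofReal_add (mul_nonneg hδ0 (Real.rpow_pos_of_pos hz _).le)
            (mul_nonneg hδ0 (Real.rpow_pos_of_pos hz _).le)]
          congr 1
          ring
  rw [integral_eq_lintegral_of_nonneg_ae
    ((ae_restrict_iff' measurableSet_Ioi).2 (ae_of_all _ hnny))
    (by fun_prop : Measurable fun y : ℝ => y ^ β * σ y ^ (-α)).aestronglyMeasurable]
  exact ENNReal.toReal_le_of_le_ofReal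
    (mul_nonneg (by linarith) (Real.rpow_pos_of_pos hz _).le) hL

theorem stmt19 (α δ : ℝ) (hα1 : 1 < α) (hα2 : α < 2)
    (σ : ℝ → ℝ) (hσm : Measurable σ) (hσ : ∀ x, 0 < x → 0 < σ x)
    (hfin : ∀ x : ℝ, 0 < x → IntegrableOn (fun z => (σ z) ^ (-α)) (Set.Ioi x))
    (hδ : ∀ x : ℝ, 0 < x →
      x ^ (α - 1) * (∫ z in Set.Ioi x, (σ z) ^ (-α)) ≤ δ) :
    ∀ x : ℝ, 0 < x →
      (1 / x ^ ((α - 1) / 2)) *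
          ∫ z in Set.Ioo (0 : ℝ) x,
            z ^ (α - 2) * (∫ y in Set.Ioi z, y ^ ((α - 1) / 2) * (σ y) ^ (-α)) ≤
        4 * δ / (α - 1) := by
  intro x hx
  have hβ : 0 < (α - 1) / 2 := by linarith
  have hδ0 : 0 ≤ δ := by
    have h1 := hδ 1 one_pos
    have h2 : 0 ≤ ∫ y in Ioi (1 : ℝ), σ y ^ (-α) :=
      setIntegral_nonneg measurableSet_Ioi fun y hy =>
        (Real.rpow_pos_of_pos (hσ y (lt_trans one_pos hy)) _).le
    rw [Real.one_rpow, one_mul] at h1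
    linarith
  have hinn : ∀ z : ℝ, 0 < z → 0 ≤ ∫ y in Ioi z, y ^ ((α - 1) / 2) * σ y ^ (-α) := by
    intro z hz
    refine setIntegral_nonneg measurableSet_Ioi fun y hy => ?_
    exact mul_nonneg (Real.rpow_pos_of_pos (hz.trans hy) _).le
      (Real.rpow_pos_of_pos (hσ y (hz.trans hy)) _).le
  have hg : IntegrableOn (fun z : ℝ => 2 * δ * z ^ ((α - 1) / 2 - 1)) (Ioo 0 x) := by
    have h1 : IntervalIntegrable (fun t : ℝ => t ^ ((α - 1) / 2 - 1)) volume 0 x :=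
      intervalIntegral.intervalIntegrable_rpow' (by linarith)
    have h2 := h1.const_mul (2 * δ)
    rwa [intervalIntegrable_iff_integrableOn_Ioo_of_le hx.le] at h2
  have hf0 : 0 ≤ᵐ[volume.restrict (Ioo 0 x)] fun z : ℝ =>
      z ^ (α - 2) * (∫ y in Ioi z, y ^ ((α - 1) / 2) * σ y ^ (-α)) := by
    refine (ae_restrict_iff' measurableSet_Ioo).2 (ae_of_all _ fun z hz => ?_)
    exact mul_nonneg (Real.rpow_pos_of_pos hz.1 _).le (hinn z hz.1)
  have hbound : (fun z : ℝ => z ^ (α - 2) * (∫ y in Ioi z, y ^ ((α - 1) / 2) * σ y ^ (-α)))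
      ≤ᵐ[volume.restrict (Ioo 0 x)] fun z : ℝ => 2 * δ * z ^ ((α - 1) / 2 - 1) := by
    refine (ae_restrict_iff' measurableSet_Ioo).2 (ae_of_all _ fun z hz => ?_)
    calc z ^ (α - 2) * (∫ y in Ioi z, y ^ ((α - 1) / 2) * σ y ^ (-α))
        ≤ z ^ (α - 2) * (2 * δ * z ^ (-((α - 1) / 2))) :=
          mul_le_mul_of_nonneg_left
            (stmt19_inner α δ hα1 hα2 σ hσm hσ hfin hδ hz.1)
            (Real.rpow_pos_of_pos hz.1 _).le
      _ = 2 * δ * z ^ ((α - 1) / 2 - 1) := by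
          rw [show z ^ (α - 2) * (2 * δ * z ^ (-((α - 1) / 2)))
              = 2 * δ * (z ^ (α - 2) * z ^ (-((α - 1) / 2))) from by ring,
            ← Real.rpow_add hz.1, show α - 2 + -((α - 1) / 2) = (α - 1) / 2 - 1 from by ring]
  have hle := integral_mono_of_nonneg hf0 hg hbound
  have hgval : (∫ z in Ioo (0 : ℝ) x, 2 * δ * z ^ ((α - 1) / 2 - 1))
      = 2 * δ * (x ^ ((α - 1) / 2) / ((α - 1) / 2)) := by
    rw [← integral_Ioc_eq_integral_Ioo, ← intervalIntegral.integral_of_le hx.le,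
      intervalIntegral.integral_const_mul, integral_rpow (Or.inl (by linarith))]
    rw [show (α - 1) / 2 - 1 + 1 = (α - 1) / 2 from by ring, Real.zero_rpow hβ.ne']
    ring
  rw [hgval] at hle
  have hxβ : 0 < x ^ ((α - 1) / 2) := Real.rpow_pos_of_pos hx _
  calc (1 / x ^ ((α - 1) / 2)) *
        ∫ z in Ioo (0 : ℝ) x, z ^ (α - 2) * (∫ y in Ioi z, y ^ ((α - 1) / 2) * σ y ^ (-α))
      ≤ (1 / x ^ ((α - 1) / 2)) * (2 * δ * (x ^ ((α - 1) / 2) / ((α - 1) / 2))) :=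
        mul_le_mul_of_nonneg_left hle (by positivity)
    _ = 4 * δ / (α - 1) := by
        have hc : x ^ ((α - 1) / 2) ≠ 0 := ne_of_gt hxβ
        have ha : α - 1 ≠ 0 := by linarith
        set c := x ^ ((α - 1) / 2) with hc0
        field_simp
        ring
end
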